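/- Let H be a Hilbert space, T = (T₁,…,Tₙ) commuting contractions on H with Tₙ pure (‖Tₙ*ᵐ f‖ → 0 for all f), and suppose Π : H → H²_{E₀⊕E₁}(𝔻^{n−1}) is an isometry with M_Φ* Π = Π Tₙ* where Φ = Φ₀ ⊕ Φ₁ is a block-diagonal multiplier with Φ₀(z) ≡ W* a constant unitary on E₀. Then ran Π ⊆ H²_{E₁}(𝔻^{n−1}). -/

import Mathlib

open ContinuousLinearMap

/-- Abstract form of Lemma on purity: `K` plays the role of the Hardy space
`H²_{E₀⊕E₁}(𝔻^{n-1})`, `K₀` the summand `H²_{E₀}(𝔻^{n-1})` and `K₀ᗮ` the summand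
`H²_{E₁}(𝔻^{n-1})`; `M` plays the role of the multiplication operator `M_Φ` of a
block-diagonal multiplier `Φ = Φ₀ ⊕ Φ₁` whose block `Φ₀ ≡ W*` is a constant unitary,
so that `M` preserves the two summands and restricts to a unitary of `K₀`.  If
`Π : H → K` is an isometry with `M_Φ* Π = Π Tₙ*` and `Tₙ` is a pure contraction,
then `ran Π ⊆ H²_{E₁}(𝔻^{n-1}) = K₀ᗮ`. -/
theorem range_dilation_in_cnu_part
    {H K : Type*} [NormedAddCommGroup H] [InnerProductSpace ℂ H] [CompleteSpace H]
    [NormedAddCommGroup K] [InnerProductSpace ℂ K] [CompleteSpace K]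
    (Tn : H →L[ℂ] H) (hTn : ‖Tn‖ ≤ 1)
    (hpure : ∀ f : H,
      Filter.Tendsto (fun m : ℕ => ‖((ContinuousLinearMap.adjoint Tn) ^ m) f‖)
        Filter.atTop (nhds 0))
    (Dil : H →L[ℂ] K) (hiso : ∀ h : H, ‖Dil h‖ = ‖h‖)
    (M : K →L[ℂ] K) (hM : ‖M‖ ≤ 1)
    (K₀ : Submodule ℂ K)
    (hM₀ : ∀ g ∈ K₀, M g ∈ K₀ ∧ ‖M g‖ = ‖g‖)
    (hM₀' : ∀ g ∈ K₀, ∃ g' ∈ K₀, M g' = g)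
    (hM₁ : ∀ g ∈ K₀ᗮ, M g ∈ K₀ᗮ)
    (hint : ContinuousLinearMap.adjoint M ∘L Dil
      = Dil ∘L ContinuousLinearMap.adjoint Tn) :
    ∀ h : H, Dil h ∈ K₀ᗮ := by
  -- intertwining iterated
  have hiter : ∀ (m : ℕ) (h : H),
      ((ContinuousLinearMap.adjoint M) ^ m) (Dil h)
        = Dil (((ContinuousLinearMap.adjoint Tn) ^ m) h) := by
    intro m
    induction m with
    | zero => intro h; simp
    | succ m ih =>
      intro h
      rw [pow_succ', pow_succ']
      have := congrFun (congrArg DFunLike.coe hint) (((ContinuousLinearMap.adjoint Tn) ^ m) h)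
      simp only [ContinuousLinearMap.comp_apply, ContinuousLinearMap.mul_apply] at this ⊢
      rw [ih h, this]
  -- existence of preimages under M^m within K₀, norm preserved
  have hpre : ∀ (m : ℕ) (g : K), g ∈ K₀ →
      ∃ g', g' ∈ K₀ ∧ (M ^ m) g' = g ∧ ‖g'‖ = ‖g‖ := by
    intro m
    induction m with
    | zero => intro g hg; exact ⟨g, hg, by simp, rfl⟩
    | succ m ih =>
      intro g hg
      obtain ⟨g', hg', hMg', hng'⟩ := ih g hg
      obtain ⟨g'', hg'', hMg''⟩ := hM₀' g' hg'
      refine ⟨g'', hg'', ?_, ?_⟩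
      · rw [pow_succ]
        simpa [ContinuousLinearMap.mul_apply, hMg''] using hMg'
      · have := (hM₀ g'' hg'').2
        rw [hMg''] at this
        rw [← this, hng']
  intro h
  rw [Submodule.mem_orthogonal]
  intro g hg
  have key : ∀ m : ℕ, ‖(inner ℂ g (Dil h) : ℂ)‖ ≤ ‖g‖ * ‖((ContinuousLinearMap.adjoint Tn) ^ m) h‖ := by
    intro m
    obtain ⟨g', hg', hMg', hng'⟩ := hpre m g hg
    have hadj : (inner ℂ g (Dil h) : ℂ) = inner ℂ g' (Dil (((ContinuousLinearMap.adjoint Tn) ^ m) h)) := by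
      rw [← hMg', ← hiter m h]
      have : (ContinuousLinearMap.adjoint M) ^ m = ContinuousLinearMap.adjoint (M ^ m) := by
        rw [← ContinuousLinearMap.star_eq_adjoint, ← ContinuousLinearMap.star_eq_adjoint,
          star_pow]
      rw [this, ContinuousLinearMap.adjoint_inner_right]
    rw [hadj]
    calc ‖(inner ℂ g' (Dil (((ContinuousLinearMap.adjoint Tn) ^ m) h)) : ℂ)‖
        ≤ ‖g'‖ * ‖Dil (((ContinuousLinearMap.adjoint Tn) ^ m) h)‖ := norm_inner_le_norm _ _
      _ = ‖g‖ * ‖((ContinuousLinearMap.adjoint Tn) ^ m) h‖ := by rw [hng', hiso]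
  have hlim : Filter.Tendsto
      (fun m : ℕ => ‖g‖ * ‖((ContinuousLinearMap.adjoint Tn) ^ m) h‖)
      Filter.atTop (nhds 0) := by
    simpa using (hpure h).const_mul ‖g‖
  have : ‖(inner ℂ g (Dil h) : ℂ)‖ ≤ 0 := ge_of_tendsto' hlim key
  have : ‖(inner ℂ g (Dil h) : ℂ)‖ = 0 := le_antisymm this (norm_nonneg _)
  exact norm_eq_zero.mp this
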